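/- For Lyndon words s and r of length at least 2 over {0,1}, Φ_s(r^∞) = (s • r)^∞ and Φ_s(L(r)^∞) = (s • L(r))^∞; that is, the substitution Φ_s maps the periodic sequence with period block r to the periodic sequence with period block s • r, and similarly for L(r). -/

import Mathlib

/-- The cyclic rotation of a binary word `c` by `i`: `c_{i+1}…c_m c_1…c_i`. -/
def rot (c : List Bool) (i : ℕ) : List Bool := c.drop i ++ c.take i

/-- The lexicographically largest cyclic rotation `L(s)` of `s`. -/
def maxRot (s : List Bool) : List Bool :=
  (List.range s.length).foldl (fun acc i => max acc (rot s i)) s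

/-- The lexicographically smallest cyclic rotation `S(s)` of `s`. -/
def minRot (s : List Bool) : List Bool :=
  (List.range s.length).foldl (fun acc i => min acc (rot s i)) s

/-- A binary word is Lyndon if every proper suffix is strictly lexicographically
greater than the prefix of the same length. -/
def IsLyndon (s : List Bool) : Prop :=
  ∀ i, 0 < i → i < s.length → s.take (s.length - i) < s.drop i

/-- Left shift on sequences. -/
def shift (x : ℕ → Bool) (n : ℕ) : ℕ → Bool := fun i => x (n + i)

/-- Strict lexicographic order on `{0,1}^ℕ`. -/
def seqLt (x y : ℕ → Bool) : Prop := ∃ n, (∀ i, i < n → x i = y i) ∧ x n < y n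

/-- Lexicographic order on `{0,1}^ℕ`. -/
def seqLe (x y : ℕ → Bool) : Prop := seqLt x y ∨ x = y

/-- The periodic sequence `w^∞` with period block `w`. -/
def perSeq (w : List Bool) : ℕ → Bool := fun n => w.getD (n % w.length) false

/-- The sequence starting with the word `w` followed by the sequence `x`. -/
def app (w : List Bool) (x : ℕ → Bool) : ℕ → Bool := fun n => w.getD n (x (n - w.length))

/-- The block emitted by the substitution `Φ_s` (with `a = L(s)`) for a pair of
consecutive digits: `00 ↦ a`, `01 ↦ a⁺`, `10 ↦ s⁻`, `11 ↦ s`. -/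
def blk (s a : List Bool) : Bool → Bool → List Bool
  | false, false => a
  | false, true  => a.dropLast ++ [true]
  | true,  false => s.dropLast ++ [false]
  | true,  true  => s

/-- The substitution `Φ_s` on infinite sequences: the first block is `s⁻` if `r 0 = 0`
and `L(s)⁺` if `r 0 = 1`; block `j+1` is determined by the pair `(r j, r (j+1))`. -/
def subst (s : List Bool) (r : ℕ → Bool) : ℕ → Bool := fun n =>
  let m := s.length
  let j := n / m
  (if j = 0 then blk s (maxRot s) (!(r 0)) (r 0)
   else blk s (maxRot s) (r (j - 1)) (r j)).getD (n % m) false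

/-- The substitution `s • r` on finite words. -/
def substWord (s : List Bool) (r : List Bool) : List Bool :=
  match r with
  | [] => []
  | c :: _ =>
      blk s (maxRot s) (!c) c ++
        ((r.zip r.tail).map fun p => blk s (maxRot s) p.1 p.2).flatten

/-- For Lyndon words `s, r` of length at least 2, the substitution `Φ_s` sends the
periodic sequence `r^∞` to `(s • r)^∞`, and `L(r)^∞` to `(s • L(r))^∞`. -/

lemma foldl_max_le (f : ℕ → List Bool) :
    ∀ (l : List ℕ) (a : List Bool), a ≤ l.foldl (fun acc i => max acc (f i)) a
  | [], a => le_refl a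
  | x :: l, a => le_trans (le_max_left a (f x)) (foldl_max_le f l _)

lemma foldl_max_ge (f : ℕ → List Bool) :
    ∀ (l : List ℕ) (a : List Bool) (i : ℕ), i ∈ l →
      f i ≤ l.foldl (fun acc i => max acc (f i)) a
  | x :: l, a, i, hi => by
      rcases List.mem_cons.1 hi with rfl | hi
      · exact le_trans (le_max_right a (f i)) (foldl_max_le f l _)
      · exact foldl_max_ge f l _ i hi

lemma foldl_max_cases (f : ℕ → List Bool) :
    ∀ (l : List ℕ) (a : List Bool),
      l.foldl (fun acc i => max acc (f i)) a = a ∨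
        ∃ i ∈ l, l.foldl (fun acc i => max acc (f i)) a = f i
  | [], a => Or.inl rfl
  | x :: l, a => by
      rcases foldl_max_cases f l (max a (f x)) with h | ⟨i, hi, h⟩
      · rcases max_cases a (f x) with ⟨h', _⟩ | ⟨h', _⟩
        · exact Or.inl (by simpa [h'] using h)
        · exact Or.inr ⟨x, List.mem_cons_self, by simpa [h'] using h⟩
      · exact Or.inr ⟨i, List.mem_cons_of_mem _ hi, h⟩

lemma rot_eq_rotate (c : List Bool) (i : ℕ) (h : i ≤ c.length) : rot c i = c.rotate i := by
  rw [List.rotate_eq_drop_append_take h]; rfl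

lemma maxRot_eq_rotate (s : List Bool) : ∃ i ≤ s.length, maxRot s = s.rotate i := by
  rcases foldl_max_cases (rot s) (List.range s.length) s with h | ⟨i, hi, h⟩
  · exact ⟨0, Nat.zero_le _, by unfold maxRot; simpa [List.rotate_zero] using h⟩
  · have hi' := List.mem_range.1 hi
    exact ⟨i, le_of_lt hi', by unfold maxRot; rw [h, rot_eq_rotate _ _ (le_of_lt hi')]⟩

lemma rot_le_maxRot (s : List Bool) (i : ℕ) (hi : i < s.length) : rot s i ≤ maxRot s :=
  foldl_max_ge (rot s) (List.range s.length) s i (List.mem_range.2 hi)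

lemma length_maxRot (s : List Bool) : (maxRot s).length = s.length := by
  obtain ⟨i, _, h⟩ := maxRot_eq_rotate s
  rw [h, List.length_rotate]

lemma singleton_lt {x y : Bool} (h : ([x] : List Bool) < [y]) : x < y := by
  cases h with
  | rel h => exact h
  | cons h => cases h

lemma lyndon_first_last (r : List Bool) (hr : 2 ≤ r.length) (hLr : IsLyndon r) :
    r.getD 0 false = false ∧ r.getD (r.length - 1) false = true := by
  have h := hLr (r.length - 1) (by omega) (by omega)
  have h0 : r.length - (r.length - 1) = 1 := by omega
  rw [h0] at h
  have hlt : r.length - 1 < r.length := by omega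
  have hd : r.drop (r.length - 1) = [r[r.length - 1]] := by
    rw [List.drop_eq_getElem_cons hlt]
    have : r.length - 1 + 1 = r.length := by omega
    rw [this, List.drop_length]
  have ht : r.take 1 = [r[0]] := by
    rcases r with _ | ⟨x, t⟩
    · simp at hr
    · simp
  rw [hd, ht] at h
  have := singleton_lt h
  rw [Bool.lt_iff] at this
  rw [List.getD_eq_getElem _ _ (by omega : (0:ℕ) < r.length),
      List.getD_eq_getElem _ _ hlt]
  exact ⟨this.1, this.2⟩

lemma cons_le_cons_iff {c : Bool} {l l' : List Bool} : (c :: l) ≤ (c :: l') ↔ l ≤ l' := by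
  rw [← not_lt, ← not_lt]
  exact not_congr List.cons_lt_cons_self

lemma alltrue : ∀ b : List Bool, (true :: b) ≤ (b ++ [true]) → ∀ x ∈ b, x = true
  | [], _ => by simp
  | x :: b, h => fun y hy => by
      cases x with
      | false =>
          exfalso
          exact absurd h (not_le_of_gt (List.Lex.rel (by decide)))
      | true =>
          have h' : (true :: b) ≤ (b ++ [true]) := by
            have : (true :: true :: b : List Bool) ≤ true :: (b ++ [true]) := h
            exact cons_le_cons_iff.1 this
          rcases List.mem_cons.1 hy with rfl | hy
          · rfl
          · exact alltrue b h' y hy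

lemma maxRot_first (r : List Bool) (hr : 2 ≤ r.length) (hLr : IsLyndon r) :
    (maxRot r).getD 0 false = true := by
  obtain ⟨_, hlast⟩ := lyndon_first_last r hr hLr
  have hlt : r.length - 1 < r.length := by omega
  have hrot : rot r (r.length - 1) ≤ maxRot r := rot_le_maxRot r _ hlt
  have hd : r.drop (r.length - 1) = [r[r.length - 1]] := by
    rw [List.drop_eq_getElem_cons hlt]
    have : r.length - 1 + 1 = r.length := by omega
    rw [this, List.drop_length]
  have hlen : 0 < (maxRot r).length := by rw [length_maxRot]; omega
  rcases hM : maxRot r with _ | ⟨c, M⟩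
  · rw [hM] at hlen; simp at hlen
  · cases c with
    | true => simp
    | false =>
        exfalso
        rw [hM] at hrot
        have : rot r (r.length - 1) = r[r.length-1] :: r.take (r.length - 1) := by
          rw [rot, hd]; rfl
        rw [this] at hrot
        rw [List.getD_eq_getElem _ _ hlt] at hlast
        rw [hlast] at hrot
        exact absurd hrot (not_le_of_gt (List.Lex.rel (by decide)))

lemma maxRot_last (r : List Bool) (hr : 2 ≤ r.length) (hLr : IsLyndon r) :
    (maxRot r).getD ((maxRot r).length - 1) false = false := by
  obtain ⟨hfirst, _⟩ := lyndon_first_last r hr hLr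
  obtain ⟨i, hi, hrot⟩ := maxRot_eq_rotate r
  have hlen : (maxRot r).length = r.length := length_maxRot r
  have hne : maxRot r ≠ [] := by
    intro h; rw [h] at hlen; simp at hlen; omega
  -- write maxRot r = b ++ [c]
  obtain ⟨b, c, hbc⟩ : ∃ b c, maxRot r = b ++ [c] := by
    refine ⟨(maxRot r).dropLast, (maxRot r).getLast hne, ?_⟩
    exact (List.dropLast_append_getLast hne).symm
  have hblen : b.length = r.length - 1 := by
    have := congrArg List.length hbc
    simp at this; omega
  have hgetc : (maxRot r).getD ((maxRot r).length - 1) false = c := by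
    rw [hbc]
    have hl : (b ++ [c]).length - 1 = b.length := by simp
    rw [hl, List.getD_eq_getElem _ _ (by simp : b.length < (b ++ [c]).length),
       List.getElem_append_right (le_refl b.length)]
    simp
  rw [hgetc]
  cases c with
  | false => rfl
  | true =>
      exfalso
      -- c::b is a rotation of r
      have h1 : (maxRot r).rotate b.length = true :: b := by
        rw [hbc, List.rotate_eq_drop_append_take (by simp)]
        simp
      have h2 : r.rotate (i + b.length) = true :: b := by
        rw [← List.rotate_rotate, ← hrot, h1]
      have h3 : r.rotate ((i + b.length) % r.length) = true :: b := by
        rw [List.rotate_mod]; exact h2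
      have hmod : (i + b.length) % r.length < r.length := Nat.mod_lt _ (by omega)
      have h4 : rot r ((i + b.length) % r.length) = true :: b := by
        rw [rot_eq_rotate _ _ (le_of_lt hmod)]; exact h3
      have h5 : (true :: b : List Bool) ≤ b ++ [true] := by
        rw [← h4, ← hbc]; exact rot_le_maxRot r _ hmod
      have hall := alltrue b h5
      -- false ∈ maxRot r
      have hf : false ∈ r := by
        rcases r with _ | ⟨x, t⟩
        · simp at hr
        · simp at hfirst; rw [← hfirst]; exact List.mem_cons_self
      have hf2 : false ∈ maxRot r := by rw [hrot, List.mem_rotate]; exact hf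
      rw [hbc] at hf2
      rcases List.mem_append.1 hf2 with h | h
      · exact absurd (hall false h) (by decide)
      · simp at h

lemma blk_length (s : List Bool) (hs : 1 ≤ s.length) (x y : Bool) :
    (blk s (maxRot s) x y).length = s.length := by
  have ha : (maxRot s).length = s.length := length_maxRot s
  cases x <;> cases y <;> simp [blk] <;> omega

lemma flatten_len (m : ℕ) : ∀ (L : List (List Bool)), (∀ b ∈ L, b.length = m) →
    L.flatten.length = L.length * m
  | [], _ => by simp
  | b :: L, h => by
      simp only [List.flatten_cons, List.length_append, List.length_cons]
      rw [flatten_len m L (fun x hx => h x (List.mem_cons_of_mem _ hx)),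
          h b List.mem_cons_self]
      ring

lemma flatten_getD (m : ℕ) : ∀ (L : List (List Bool)) (q i : ℕ),
    (∀ b ∈ L, b.length = m) → q < L.length → i < m →
    L.flatten.getD (q * m + i) false = (L.getD q []).getD i false
  | [], q, i => by simp
  | b :: L, 0, i => fun hlen hq hi => by
      have hb : b.length = m := hlen b List.mem_cons_self
      simp only [List.flatten_cons, zero_mul, zero_add, List.getD_cons_zero]
      have hib : i < b.length := by omega
      rw [List.getD_eq_getElem _ _ (by simp; omega : i < (b ++ L.flatten).length),
          List.getElem_append_left hib, List.getD_eq_getElem _ _ hib]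
  | b :: L, q + 1, i => fun hlen hq hi => by
      have hb : b.length = m := hlen b List.mem_cons_self
      have hL : ∀ x ∈ L, x.length = m := fun x hx => hlen x (List.mem_cons_of_mem _ hx)
      have hqL : q < L.length := by simpa using hq
      have hflen : L.flatten.length = L.length * m := flatten_len m L hL
      have harith : (q + 1) * m + i = b.length + (q * m + i) := by
        rw [hb]; ring
      simp only [List.flatten_cons, List.getD_cons_succ]
      rw [harith]
      have hlt : q * m + i < L.flatten.length := by
        rw [hflen]
        have h1 : q * m + i < (q + 1) * m := by
          have : (q+1) * m = q * m + m := by ring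
          omega
        have h2 : (q + 1) * m ≤ L.length * m := Nat.mul_le_mul_right m hqL
        omega
      rw [List.getD_eq_getElem _ _ (by simp only [List.length_append]; omega : b.length + (q*m+i) < (b ++ L.flatten).length),
          List.getElem_append_right (Nat.le_add_right _ _)]
      simp only [Nat.add_sub_cancel_left]
      rw [← List.getD_eq_getElem _ false hlt]
      exact flatten_getD m L q i hL hqL hi

lemma substWord_eq (s w : List Bool) (hw : w ≠ []) :
    substWord s w = blk s (maxRot s) (!(w.getD 0 false)) (w.getD 0 false) ++
      ((w.zip w.tail).map fun p => blk s (maxRot s) p.1 p.2).flatten := by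
  rcases w with _ | ⟨c, t⟩
  · simp at hw
  · simp [substWord]

lemma subst_perSeq_key (s w : List Bool) (hs : 2 ≤ s.length) (hw : 2 ≤ w.length)
    (hwl : w.getD (w.length - 1) false = ! w.getD 0 false) :
    subst s (perSeq w) = perSeq (substWord s w) := by
  set m := s.length with hm'
  set k := w.length with hk'
  have hm : 0 < m := by omega
  have hk : 0 < k := by omega
  set f : Bool × Bool → List Bool := fun p => blk s (maxRot s) p.1 p.2 with hf
  set L : List (List Bool) :=
    blk s (maxRot s) (!(w.getD 0 false)) (w.getD 0 false) :: ((w.zip w.tail).map f) with hL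
  have hflat : substWord s w = L.flatten := by
    rw [substWord_eq s w (by intro h; rw [h] at hk'; simp at hk'; omega), hL,
        List.flatten_cons]
  have hzl : (w.zip w.tail).length = k - 1 := by
    simp [List.length_zip]; rfl
  have hLlen : L.length = k := by
    rw [hL]; simp [hzl]; omega
  have hLm : ∀ b ∈ L, b.length = m := by
    intro b hb
    rcases List.mem_cons.1 hb with rfl | hb
    · exact blk_length s (by omega) _ _
    · obtain ⟨p, _, rfl⟩ := List.mem_map.1 hb
      exact blk_length s (by omega) _ _
  have hfl : L.flatten.length = k * m := by rw [flatten_len m L hLm, hLlen]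
  -- getD of L
  have hLget : ∀ q : ℕ, q < k → L.getD q [] =
      (if q = 0 then blk s (maxRot s) (!(w.getD 0 false)) (w.getD 0 false)
       else blk s (maxRot s) (w.getD (q-1) false) (w.getD q false)) := by
    intro q hq
    rcases q with _ | q'
    · simp [hL]
    · have hq1 : q' < (w.zip w.tail).length := by omega
      have hq2 : q' < w.tail.length := by simp; omega
      have hq3 : q' < k := by omega
      have hq4 : q' + 1 < k := hq
      simp only [hL, List.getD_cons_succ, if_neg (Nat.succ_ne_zero q'), Nat.add_sub_cancel]
      rw [List.getD_eq_getElem _ _ (by simpa using hq1), List.getElem_map, List.getElem_zip]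
      rw [hf]
      simp only []
      rw [List.getElem_tail, List.getD_eq_getElem _ _ (show q' < w.length from hq3),
          List.getD_eq_getElem _ _ (show q' + 1 < w.length from hq4)]
  funext n
  set j := n / m with hj'
  set i := n % m with hi'
  have hi : i < m := Nat.mod_lt _ hm
  have hn : n = m * j + i := (Nat.div_add_mod n m).symm
  set q := j % k with hq'
  set t := j / k with ht'
  have hq : q < k := Nat.mod_lt _ hk
  have hj : j = k * t + q := (Nat.div_add_mod j k).symm
  -- RHS index
  have hmod : n % (k * m) = q * m + i := by
    have h1 : n = (q * m + i) + (k * m) * t := by rw [hn, hj]; ring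
    have h2 : q * m + i < k * m := by
      have h3 : (q + 1) * m ≤ k * m := Nat.mul_le_mul_right m (by omega)
      have h4 : (q + 1) * m = q * m + m := by ring
      omega
    rw [h1, Nat.add_mul_mod_self_left, Nat.mod_eq_of_lt h2]
  have hrhs : perSeq (substWord s w) n = (L.getD q []).getD i false := by
    rw [perSeq, hflat, hfl, hmod]
    exact flatten_getD m L q i hLm (by omega) hi
  rw [hrhs, hLget q hq]
  -- LHS
  show (if j = 0 then blk s (maxRot s) (!(perSeq w 0)) (perSeq w 0)
    else blk s (maxRot s) (perSeq w (j-1)) (perSeq w j)).getD i false = _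
  have hp0 : perSeq w 0 = w.getD 0 false := by simp [perSeq]
  have hpj : perSeq w j = w.getD q false := by simp [perSeq]; rfl
  by_cases hj0 : j = 0
  · have : q = 0 := by rw [hq', hj0]; simp
    rw [if_pos hj0, if_pos this, hp0]
  · rw [if_neg hj0]
    by_cases hq0 : q = 0
    · rw [if_pos hq0]
      have ht1 : 1 ≤ t := by
        rcases Nat.eq_zero_or_pos t with h | h
        · exfalso; apply hj0; rw [hj, h, hq0]; simp
        · exact h
      have hjm : (j - 1) % k = k - 1 := by
        have : j - 1 = (k - 1) + k * (t - 1) := by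
          have h6 : k * t = k * (t-1) + k := by
            conv_lhs => rw [show t = (t-1)+1 by omega]
            rw [Nat.mul_add, Nat.mul_one]
          have hjq : j = k * t := by omega
          omega
        rw [this, Nat.add_mul_mod_self_left, Nat.mod_eq_of_lt (by omega)]
      have hpj1 : perSeq w (j - 1) = w.getD (k-1) false := by
        simp only [perSeq, ← hk', hjm]
      rw [hpj1, hpj, hq0, hwl]
    · rw [if_neg hq0]
      have hjm : (j - 1) % k = q - 1 := by
        have h5 : j - 1 = (q - 1) + k * t := by omega
        rw [h5, Nat.add_mul_mod_self_left, Nat.mod_eq_of_lt (by omega)]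
      have hpj1 : perSeq w (j - 1) = w.getD (q-1) false := by
        simp only [perSeq, ← hk', hjm]
      rw [hpj1, hpj]

theorem stmt11 (s r : List Bool) (hs : 2 ≤ s.length) (hr : 2 ≤ r.length)
    (hLs : IsLyndon s) (hLr : IsLyndon r) :
    subst s (perSeq r) = perSeq (substWord s r) ∧
    subst s (perSeq (maxRot r)) = perSeq (substWord s (maxRot r)) := by
  constructor
  · apply subst_perSeq_key s r hs hr
    obtain ⟨h0, h1⟩ := lyndon_first_last r hr hLr
    rw [h0, h1]; rfl
  · have hlen : (maxRot r).length = r.length := length_maxRot r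
    apply subst_perSeq_key s (maxRot r) hs (by omega)
    rw [maxRot_first r hr hLr, maxRot_last r hr hLr]; rfl
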